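/- For a powerset-enriched monad T, every T-algebra (X, a) gives rise to a T-monoid (X, a*): the right adjoint a* : X → TX of the structure map satisfies reflexivity η_X ≤ a* and transitivity μ_X ∘ T(a*) ∘ a* ≤ a*; moreover every T-algebra homomorphism f : (X,a) → (Y,b) is a T-monoid homomorphism (X, a*) → (Y, b*), i.e., Tf ∘ a* ≤ b* ∘ f. -/
import Mathlib


universe u

/-- A powerset-enriched monad on `Set`: a monad `(T, η, μ)` together with a monad
morphism `τ` from the powerset monad. -/
structure PSEM : Type (u + 1) where
  T : Type u → Type u
  map : ∀ {X Y : Type u}, (X → Y) → T X → T Y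
  η : ∀ {X : Type u}, X → T X
  μ : ∀ {X : Type u}, T (T X) → T X
  τ : ∀ {X : Type u}, Set X → T X
  map_id : ∀ {X : Type u} (t : T X), map id t = t
  map_comp : ∀ {X Y Z : Type u} (f : X → Y) (g : Y → Z) (t : T X),
    map (g ∘ f) t = map g (map f t)
  η_nat : ∀ {X Y : Type u} (f : X → Y) (x : X), map f (η x) = η (f x)
  μ_nat : ∀ {X Y : Type u} (f : X → Y) (t : T (T X)),
    map f (μ t) = μ (map (map f) t)
  unit_left : ∀ {X : Type u} (t : T X), μ (η t) = t
  unit_right : ∀ {X : Type u} (t : T X), μ (map η t) = t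
  assoc : ∀ {X : Type u} (t : T (T (T X))), μ (μ t) = μ (map μ t)
  τ_nat : ∀ {X Y : Type u} (f : X → Y) (A : Set X), map f (τ A) = τ (f '' A)
  τ_η : ∀ {X : Type u} (x : X), τ ({x} : Set X) = η x
  τ_μ : ∀ {X : Type u} (𝒮 : Set (Set X)), τ (⋃₀ 𝒮) = μ (map τ (τ 𝒮))

namespace PSEM

variable (M : PSEM.{u})

/-- The supremum map `μ_X ∘ τ_{TX} : P(TX) → TX` on `T X`. -/
def ksup {X : Type u} (S : Set (M.T X)) : M.T X := M.μ (M.τ S)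

/-- The order induced on `T X` by the sup-semilattice structure `μ_X ∘ τ_{TX}`. -/
def kle {X : Type u} (t t' : M.T X) : Prop := M.ksup {t, t'} = t'

/-- The order induced on a `T`-algebra `(V, q)` by the sup-semilattice structure
`q ∘ τ_V`. -/
def algLe {V : Type u} (q : M.T V → V) (v w : V) : Prop := q (M.τ {v, w}) = w

/-- Infima in a `T`-algebra `(V, q)`, computed as the supremum of the lower bounds. -/
def algInf {V : Type u} (q : M.T V → V) (S : Set V) : V :=
  q (M.τ {v | ∀ w ∈ S, M.algLe q v w})

end PSEM

section Aux

variable (M : PSEM.{u})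

/-- The structure map turns suprema of subsets into suprema of their images. -/
theorem PSEM.sup_img {V : Type u} (q : M.T V → V)
    (hq2 : ∀ t : M.T (M.T V), q (M.μ t) = q (M.map q t))
    (S : Set (Set V)) :
    q (M.τ (⋃₀ S)) = q (M.τ ((fun A => q (M.τ A)) '' S)) := by
  rw [M.τ_μ, hq2, ← M.map_comp, M.τ_nat]
  rfl

theorem PSEM.algLe_refl {V : Type u} (q : M.T V → V)
    (hq1 : ∀ v, q (M.η v) = v) (v : V) : M.algLe q v v := by
  show q (M.τ {v, v}) = v
  rw [Set.pair_eq_singleton, M.τ_η, hq1]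

theorem PSEM.algLe_trans {V : Type u} (q : M.T V → V)
    (hq1 : ∀ v, q (M.η v) = v)
    (hq2 : ∀ t : M.T (M.T V), q (M.μ t) = q (M.map q t))
    {u v w : V} (h1 : M.algLe q u v) (h2 : M.algLe q v w) :
    M.algLe q u w := by
  have h1' : q (M.τ {u, v}) = v := h1
  have h2' : q (M.τ {v, w}) = w := h2
  have e1 := M.sup_img q hq2 {{u}, {v, w}}
  have e2 := M.sup_img q hq2 {{u, v}, {w}}
  rw [Set.sUnion_pair, Set.image_pair, M.τ_η, hq1, h2'] at e1
  rw [Set.sUnion_pair, Set.image_pair, M.τ_η, hq1, h1'] at e2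
  have hs1 : ({u} : Set V) ∪ {v, w} = {u, v, w} := by ext z; simp; tauto
  have hs2 : ({u, v} : Set V) ∪ {w} = {u, v, w} := by
    ext z; simp; tauto
  rw [hs1] at e1
  rw [hs2] at e2
  show q (M.τ {u, w}) = w
  rw [← e1, e2, h2']

theorem PSEM.algLe_sup_left {V : Type u} (q : M.T V → V)
    (hq1 : ∀ v, q (M.η v) = v)
    (hq2 : ∀ t : M.T (M.T V), q (M.μ t) = q (M.map q t))
    (v w : V) : M.algLe q v (q (M.τ {v, w})) := by
  have e := M.sup_img q hq2 {{v}, {v, w}}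
  have hs : ({v} : Set V) ∪ {v, w} = {v, w} := by ext z; simp; tauto
  rw [Set.sUnion_pair, Set.image_pair, M.τ_η, hq1, hs] at e
  exact e.symm

theorem PSEM.kle_iff {V : Type u} (t t' : M.T V) :
    M.kle t t' ↔ M.algLe M.μ t t' := Iff.rfl

theorem PSEM.kle_refl {V : Type u} (t : M.T V) : M.kle t t :=
  M.algLe_refl M.μ M.unit_left t

/-- `μ (τ {η v, η w}) = τ {v, w}`. -/
theorem PSEM.mu_tau_pair_eta {V : Type u} (v w : V) :
    M.μ (M.τ {M.η v, M.η w}) = M.τ {v, w} := by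
  rw [← Set.image_pair, ← M.τ_nat, M.unit_right]

/-- `η v ≤ τ {v, w}` in the induced order on `T V`. -/
theorem PSEM.eta_le_pair {V : Type u} (v w : V) :
    M.kle (M.η v) (M.τ {v, w}) := by
  have h := M.algLe_sup_left M.μ M.unit_left M.assoc (M.η v) (M.η w)
  rw [M.mu_tau_pair_eta] at h
  exact h

/-- An algebra structure map is monotone from `kle` to `algLe`. -/
theorem PSEM.alg_mono {V : Type u} (q : M.T V → V)
    (hq2 : ∀ t : M.T (M.T V), q (M.μ t) = q (M.map q t))
    {t t' : M.T V} (h : M.kle t t') : M.algLe q (q t) (q t') := by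
  have h' : M.μ (M.τ {t, t'}) = t' := h
  show q (M.τ {q t, q t'}) = q t'
  conv_rhs => rw [← h', hq2, M.τ_nat, Set.image_pair]

end Aux

/-- For a powerset-enriched monad `T`, every `T`-algebra `(X, a)` gives a `T`-monoid
`(X, a*)`: the right adjoint `a*` of the structure map satisfies reflexivity
`η_X ≤ a*` and transitivity `μ_X ∘ T(a*) ∘ a* ≤ a*`, and every `T`-algebra
homomorphism `f : (X,a) → (Y,b)` satisfies `Tf ∘ a* ≤ b* ∘ f`. -/
theorem algebra_to_kleisli_monoid (M : PSEM.{u})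
    (enr : ∀ {X Y : Type u} (f g : X → M.T Y),
      (∀ x, M.kle (f x) (g x)) →
      ∀ t : M.T X, M.kle (M.μ (M.map f t)) (M.μ (M.map g t)))
    {X Y : Type u}
    (a : M.T X → X)
    (ha1 : ∀ x : X, a (M.η x) = x)
    (ha2 : ∀ t : M.T (M.T X), a (M.μ t) = a (M.map a t))
    (astar : X → M.T X)
    (gca : ∀ (t : M.T X) (x : X), M.algLe a (a t) x ↔ M.kle t (astar x))
    (b : M.T Y → Y)
    (hb1 : ∀ y : Y, b (M.η y) = y)
    (hb2 : ∀ t : M.T (M.T Y), b (M.μ t) = b (M.map b t))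
    (bstar : Y → M.T Y)
    (gcb : ∀ (t : M.T Y) (y : Y), M.algLe b (b t) y ↔ M.kle t (bstar y))
    (f : X → Y)
    (hf : ∀ t : M.T X, f (a t) = b (M.map f t)) :
    (∀ x : X, M.kle (M.η x) (astar x)) ∧
    (∀ x : X, M.kle (M.μ (M.map astar (astar x))) (astar x)) ∧
    (∀ x : X, M.kle (M.map f (astar x)) (bstar (f x))) := by
  -- a (astar y) ≤ y
  have aastar_le : ∀ y : X, M.algLe a (a (astar y)) y := fun y =>
    (gca (astar y) y).mpr (M.kle_refl (astar y))
  refine ⟨?_, ?_, ?_⟩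
  · -- reflexivity: η x ≤ astar x
    intro x
    refine (gca (M.η x) x).mp ?_
    rw [ha1]
    exact M.algLe_refl a ha1 x
  · -- transitivity
    intro x
    refine (gca _ x).mp ?_
    have e0 : a (M.μ (M.map astar (astar x))) = a (M.map (a ∘ astar) (astar x)) := by
      rw [ha2, ← M.map_comp]
    set g : X → M.T X := fun y => M.τ {a (astar y), y} with hg
    have hpt : ∀ y, M.kle (M.η (a (astar y))) (g y) := fun y =>
      M.eta_le_pair (a (astar y)) y
    have henr := enr (fun y => M.η (a (astar y))) g hpt (astar x)
    have e1 : M.μ (M.map (fun y => M.η (a (astar y))) (astar x))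
        = M.map (a ∘ astar) (astar x) := by
      have hfun : (fun y => M.η (a (astar y))) = M.η ∘ (a ∘ astar) := rfl
      rw [hfun, M.map_comp, M.unit_right]
    rw [e1] at henr
    have step1 := M.alg_mono a ha2 henr
    have e2 : a (M.μ (M.map g (astar x))) = a (astar x) := by
      rw [ha2, ← M.map_comp]
      have hag : (a ∘ g) = id := funext fun y => aastar_le y
      rw [hag, M.map_id]
    rw [e2] at step1
    have step2 := M.algLe_trans a ha1 ha2 step1 (aastar_le x)
    rw [← e0] at step2
    exact step2
  · -- f is a T-monoid homomorphism
    intro x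
    refine (gcb (M.map f (astar x)) (f x)).mp ?_
    have e : b (M.map f (astar x)) = f (a (astar x)) := (hf (astar x)).symm
    rw [e]
    -- f is monotone: algLe a v w → algLe b (f v) (f w)
    have hmono : M.algLe b (f (a (astar x))) (f x) := by
      have h := aastar_le x
      show b (M.τ {f (a (astar x)), f x}) = f x
      rw [← Set.image_pair, ← M.τ_nat, ← hf]
      have h' : a (M.τ {a (astar x), x}) = x := h
      rw [h']
    exact hmono
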